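/- (Andreani–Echagüe–Schuverdt) Let x* be a local minimizer of (NLP) such that the rank of the Jacobian matrix J(x) ∈ ℝ^{(m+q)×n} is constant for all x in a neighborhood of x*, where q is the number of active inequality constraints at x*. Then every Lagrange multiplier (λ,μ) ∈ Λ(x*) (if any exists) satisfies dᵀ∇²ₓₓL(x*,λ,μ)d ≥ 0 for all d ∈ S(x*). -/

import Mathlib

open scoped BigOperators Pointwise
open Matrix

attribute [local instance] Classical.propDecidable

noncomputable section

/-- The gradient vector of `φ` at `x` (the vector of partial derivatives). -/
def gradVec {n : ℕ} (φ : (Fin n → ℝ) → ℝ) (x : Fin n → ℝ) : Fin n → ℝ :=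
  fun k => fderiv ℝ φ x (Pi.single k 1)

/-- The quadratic form `d ↦ dᵀ ∇²φ(x) d` of the Hessian of `φ` at `x`. -/
def hessQ {n : ℕ} (φ : (Fin n → ℝ) → ℝ) (x d : Fin n → ℝ) : ℝ :=
  iteratedFDeriv ℝ 2 φ x ![d, d]

/-- Feasibility for the problem (NLP). -/
def Feas {n m p : ℕ} (h : Fin m → (Fin n → ℝ) → ℝ) (g : Fin p → (Fin n → ℝ) → ℝ)
    (x : Fin n → ℝ) : Prop :=
  (∀ i, h i x = 0) ∧ ∀ j, g j x ≤ 0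

/-- The Lagrangian of (NLP). -/
def Lagr {n m p : ℕ} (f : (Fin n → ℝ) → ℝ) (h : Fin m → (Fin n → ℝ) → ℝ)
    (g : Fin p → (Fin n → ℝ) → ℝ) (lam : Fin m → ℝ) (mu : Fin p → ℝ) (x : Fin n → ℝ) : ℝ :=
  f x + ∑ i, lam i * h i x + ∑ j, mu j * g j x

/-- `(lam, mu)` is a Lagrange multiplier at `xs`, i.e. `(lam, mu) ∈ Λ(xs)`. -/
def IsLagMult {n m p : ℕ} (f : (Fin n → ℝ) → ℝ) (h : Fin m → (Fin n → ℝ) → ℝ)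
    (g : Fin p → (Fin n → ℝ) → ℝ) (xs : Fin n → ℝ) (lam : Fin m → ℝ) (mu : Fin p → ℝ) : Prop :=
  (∀ j, 0 ≤ mu j) ∧ fderiv ℝ (Lagr f h g lam mu) xs = 0 ∧ ∀ j, mu j * g j xs = 0

/-- The Mangasarian-Fromovitz constraint qualification at `xs`. -/
def MFCQ {n m p : ℕ} (h : Fin m → (Fin n → ℝ) → ℝ) (g : Fin p → (Fin n → ℝ) → ℝ)
    (xs : Fin n → ℝ) : Prop :=
  LinearIndependent ℝ (fun i : Fin m => fderiv ℝ (h i) xs) ∧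
  ∃ d : Fin n → ℝ, (∀ i, fderiv ℝ (h i) xs d = 0) ∧
    ∀ j, g j xs = 0 → fderiv ℝ (g j) xs d < 0

/-- Membership in the critical cone `C(xs)`. -/
def critCone {n m p : ℕ} (f : (Fin n → ℝ) → ℝ) (h : Fin m → (Fin n → ℝ) → ℝ)
    (g : Fin p → (Fin n → ℝ) → ℝ) (xs d : Fin n → ℝ) : Prop :=
  fderiv ℝ f xs d = 0 ∧ (∀ i, fderiv ℝ (h i) xs d = 0) ∧
    ∀ j, g j xs = 0 → fderiv ℝ (g j) xs d ≤ 0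

/-- Membership in the critical subspace `S(xs)`. -/
def critSub {n m p : ℕ} (h : Fin m → (Fin n → ℝ) → ℝ) (g : Fin p → (Fin n → ℝ) → ℝ)
    (xs d : Fin n → ℝ) : Prop :=
  (∀ i, fderiv ℝ (h i) xs d = 0) ∧ ∀ j, g j xs = 0 → fderiv ℝ (g j) xs d = 0

/-- The Jacobian matrix `J(x)` of equality and active inequality constraints
(activity taken at the base point `xs`). -/
def Jac {n m p : ℕ} (h : Fin m → (Fin n → ℝ) → ℝ) (g : Fin p → (Fin n → ℝ) → ℝ)
    (xs x : Fin n → ℝ) : Matrix (Fin m ⊕ {j : Fin p // g j xs = 0}) (Fin n) ℝ :=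
  Matrix.of fun i k =>
    Sum.elim (fun i' => fderiv ℝ (h i') x (Pi.single k 1))
      (fun j' => fderiv ℝ (g j'.1) x (Pi.single k 1)) i

/-- A first-order cone: the (direct) sum of a linear subspace and a ray. -/
def IsFirstOrderCone {n : ℕ} (K : Set (Fin n → ℝ)) : Prop :=
  ∃ (W : Submodule ℝ (Fin n → ℝ)) (d0 : Fin n → ℝ),
    K = {x | ∃ w ∈ W, ∃ r : ℝ, 0 ≤ r ∧ x = w + r • d0}

/-- The rank of a family of vectors: the dimension of its linear span. -/
def famRank {ι : Type*} {n : ℕ} (v : ι → (Fin n → ℝ)) : ℕ :=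
  Module.finrank ℝ (Submodule.span ℝ (Set.range v))


lemma clm_apply_eq_sum {n : ℕ} (φ : (Fin n → ℝ) →L[ℝ] ℝ) (d : Fin n → ℝ) :
    φ d = ∑ k, d k * φ (Pi.single k 1) := by
  have hd : d = ∑ k, d k • (Pi.single k 1 : Fin n → ℝ) := by
    ext j
    simp [Pi.single_apply, Finset.sum_apply]
  conv_lhs => rw [hd]
  rw [map_sum]
  exact Finset.sum_congr rfl fun k _ => by rw [φ.map_smul]; rfl

lemma span_dot_zero {n : ℕ} {S : Set (Fin n → ℝ)} {v e : Fin n → ℝ}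
    (hv : v ∈ Submodule.span ℝ S) (he : ∀ u ∈ S, e ⬝ᵥ u = 0) : e ⬝ᵥ v = 0 := by
  induction hv using Submodule.span_induction with
  | mem x hx => exact he x hx
  | zero => simp
  | add x y _ _ hx hy => rw [dotProduct_add, hx, hy, add_zero]
  | smul a x _ hx => rw [dotProduct_smul, hx, smul_zero]

lemma second_order_1d {l l' : ℝ → ℝ} {a : ℝ}
    (hmin : ∀ᶠ s in nhds 0, l 0 ≤ l s)
    (hd : ∀ᶠ s in nhds 0, HasDerivAt l (l' s) s)
    (h0 : l' 0 = 0) (h2 : HasDerivAt l' a 0) : 0 ≤ a := by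
  by_contra hneg
  push_neg at hneg
  have hslope : Filter.Tendsto (slope l' 0) (nhdsWithin 0 {(0:ℝ)}ᶜ) (nhds a) :=
    hasDerivAt_iff_tendsto_slope.1 h2
  have hlt : ∀ᶠ s in nhdsWithin 0 {(0:ℝ)}ᶜ, slope l' 0 s < a / 2 :=
    hslope.eventually_lt_const (by linarith)
  have hlt' : ∀ᶠ s in nhdsWithin (0:ℝ) (Set.Ioi 0), l' s < 0 := by
    have := hlt.filter_mono (nhdsWithin_mono 0 (fun x hx => ne_of_gt hx))
    filter_upwards [this, self_mem_nhdsWithin] with s hs hs'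
    rw [slope_def_field, h0, sub_zero, sub_zero] at hs
    have hspos : (0:ℝ) < s := hs'
    calc l' s = (l' s / s) * s := by field_simp
    _ < 0 := mul_neg_of_neg_of_pos (lt_of_lt_of_le hs (by linarith)) hspos
  obtain ⟨ε₁, hε₁, hball⟩ := Metric.eventually_nhds_iff.1 (hmin.and hd)
  obtain ⟨ε₂, hε₂, hIoo⟩ := (nhdsGT_basis_of_exists_gt (α := ℝ) ⟨1, zero_lt_one⟩).eventually_iff.1 hlt'
  set b := min (ε₁ / 2) (ε₂ / 2) with hb
  have hbpos : 0 < b := by positivity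
  have hbmem : ∀ s ∈ Set.Icc 0 b, dist s (0:ℝ) < ε₁ := by
    intro s hs
    rw [Real.dist_eq, sub_zero, abs_of_nonneg hs.1]
    have := hs.2
    have : b < ε₁ := by simp only [hb]; exact lt_of_le_of_lt (min_le_left _ _) (by linarith)
    linarith [hs.2]
  have hmvt := exists_hasDerivAt_eq_slope l l' hbpos
    (fun s hs => ((hball (hbmem s hs)).2).continuousAt.continuousWithinAt)
    (fun s hs => (hball (hbmem s ⟨le_of_lt hs.1, le_of_lt hs.2⟩)).2)
  obtain ⟨c, hc, hceq⟩ := hmvt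
  have hcneg : l' c < 0 := by
    apply hIoo
    constructor
    · exact hc.1
    · have : b < ε₂ := lt_of_le_of_lt (min_le_right _ _) (by linarith)
      exact lt_trans hc.2 this
  rw [hceq] at hcneg
  have : l b < l 0 := by
    have hb0 : (0:ℝ) < b - 0 := by linarith
    rcases div_neg_iff.1 hcneg with ⟨h1, h2⟩ | ⟨h1, h2⟩
    · linarith
    · linarith
  have := (hball (hbmem b ⟨le_of_lt hbpos, le_refl b⟩)).1
  linarith


lemma comp_curve {n : ℕ} {L : (Fin n → ℝ) → ℝ} {γ : ℝ → (Fin n → ℝ)} {xs d : Fin n → ℝ}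
    (hL : ContDiff ℝ 2 L) (hγ : ContDiffAt ℝ 2 γ 0) (hγ0 : γ 0 = xs)
    (hγd : HasDerivAt γ d 0) (hL0 : fderiv ℝ L xs = 0) :
    ∃ l' : ℝ → ℝ,
      (∀ᶠ s in nhds 0, HasDerivAt (fun s => L (γ s)) (l' s) s) ∧ l' 0 = 0 ∧
      HasDerivAt l' (fderiv ℝ (fderiv ℝ L) xs d d) 0 := by
  obtain ⟨u, hu, huc⟩ := hγ.contDiffOn (le_refl 2) (by simp)
  set V := interior u with hV
  have hVopen : IsOpen V := isOpen_interior
  have hV0 : (0:ℝ) ∈ V := mem_interior_iff_mem_nhds.2 hu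
  have hcV : ContDiffOn ℝ 2 γ V := huc.mono interior_subset
  have hdiff : ∀ s ∈ V, HasDerivAt γ (deriv γ s) s := by
    intro s hs
    exact ((hcV.differentiableOn (by norm_num)).differentiableAt
      (hVopen.mem_nhds hs)).hasDerivAt
  set γ' := deriv γ with hγ'
  have hγ'0 : γ' 0 = d := hγd.deriv
  set l' : ℝ → ℝ := fun s => fderiv ℝ L (γ s) (γ' s) with hl'
  refine ⟨l', ?_, ?_, ?_⟩
  · filter_upwards [hVopen.mem_nhds hV0] with s hs
    exact ((hL.differentiable (by norm_num) (γ s)).hasFDerivAt).comp_hasDerivAt s (hdiff s hs)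
  · simp [hl', hγ0, hγ'0, hL0]
  · -- derivative of l' at 0
    have hA : HasDerivAt (fun s => fderiv ℝ L (γ s)) (fderiv ℝ (fderiv ℝ L) xs d) 0 := by
      have h1 : ContDiff ℝ 1 (fderiv ℝ L) := hL.fderiv_right (by norm_num)
      have h2 : HasFDerivAt (fderiv ℝ L) (fderiv ℝ (fderiv ℝ L) xs) (γ 0) := by
        rw [hγ0]
        exact (h1.differentiable (by norm_num) xs).hasFDerivAt
      exact h2.comp_hasDerivAt 0 hγd
    have hB : HasDerivAt γ' (deriv γ' 0) 0 := by
      have h21 : ContDiffOn ℝ (1 + 1) γ V := by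
        have : ((1:WithTop ℕ∞) + 1) = 2 := by norm_num
        rw [this]; exact hcV
      have hc1' : ContDiffOn ℝ 1 γ' V :=
        ((contDiffOn_succ_iff_deriv_of_isOpen hVopen).1 h21).2.2
      exact ((hc1'.differentiableOn (by norm_num)).differentiableAt
        (hVopen.mem_nhds hV0)).hasDerivAt
    have := hA.clm_apply hB
    simp only [hγ0, hγ'0, hL0] at this
    simpa using this


lemma exists_curve {n : ℕ} {κ : Type*} [Fintype κ] [DecidableEq κ]
    (F : κ → (Fin n → ℝ) → ℝ) (hF : ∀ i, ContDiff ℝ 2 (F i))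
    (xs : Fin n → ℝ) (hF0 : ∀ i, F i xs = 0)
    (u : κ → (Fin n → ℝ)) (hu : ∀ i j, fderiv ℝ (F i) xs (u j) = if i = j then 1 else 0)
    (d : Fin n → ℝ) (hd : ∀ i, fderiv ℝ (F i) xs d = 0) :
    ∃ γ : ℝ → (Fin n → ℝ), ContDiffAt ℝ 2 γ 0 ∧ γ 0 = xs ∧ HasDerivAt γ d 0 ∧
      ∀ᶠ s in nhds 0, ∀ i, F i (γ s) = 0 := by
  set inn : (ℝ × (κ → ℝ)) → (Fin n → ℝ) := fun q => xs + (q.1 • d + ∑ j, q.2 j • u j) with hinn_def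
  have hinn : ContDiff ℝ 2 inn := by
    apply ContDiff.add contDiff_const
    apply ContDiff.add (contDiff_fst.smul contDiff_const)
    exact ContDiff.sum fun j _ => ((contDiff_pi.1 contDiff_snd j).fun_smul contDiff_const)
  have hinn00 : inn (0, 0) = xs := by simp [hinn_def]
  set Ψ : (ℝ × (κ → ℝ)) → (ℝ × (κ → ℝ)) := fun q => (q.1, fun i => F i (inn q)) with hΨ_def
  have hΨs : ContDiff ℝ 2 Ψ :=
    contDiff_fst.prodMk (contDiff_pi.2 fun i => (hF i).comp hinn)
  -- the derivative of inn
  set A : (ℝ × (κ → ℝ)) →L[ℝ] (Fin n → ℝ) :=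
    (ContinuousLinearMap.fst ℝ ℝ (κ → ℝ)).smulRight d +
      ∑ j : κ, (((ContinuousLinearMap.proj j).comp
        (ContinuousLinearMap.snd ℝ ℝ (κ → ℝ))).smulRight (u j)) with hA_def
  have hinnA : ∀ q₀ : (ℝ × (κ → ℝ)), HasFDerivAt inn A q₀ := by
    intro q₀
    have h1 : HasFDerivAt (fun q : (ℝ × (κ → ℝ)) => q.1 • d)
        ((ContinuousLinearMap.fst ℝ ℝ (κ → ℝ)).smulRight d) q₀ :=
      (hasFDerivAt_fst).smul_const d
    have h2 : ∀ j : κ, HasFDerivAt (fun q : (ℝ × (κ → ℝ)) => q.2 j • u j)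
        ((((ContinuousLinearMap.proj j).comp
          (ContinuousLinearMap.snd ℝ ℝ (κ → ℝ))).smulRight (u j))) q₀ := by
      intro j
      exact ((ContinuousLinearMap.proj j (R := ℝ) (φ := fun _ : κ => ℝ)).hasFDerivAt.comp q₀
        hasFDerivAt_snd).smul_const (u j)
    exact ((h1.add (HasFDerivAt.fun_sum fun j _ => h2 j)).const_add xs)
  -- derivative of Ψ at (0,0) is the identity
  set e : (ℝ × (κ → ℝ)) ≃L[ℝ] (ℝ × (κ → ℝ)) := ContinuousLinearEquiv.refl ℝ (ℝ × (κ → ℝ)) with he_def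
  have hΨ' : HasFDerivAt Ψ (e : (ℝ × (κ → ℝ)) →L[ℝ] (ℝ × (κ → ℝ))) (0, 0) := by
    set Ψ' : (ℝ × (κ → ℝ)) →L[ℝ] (ℝ × (κ → ℝ)) := (ContinuousLinearMap.fst ℝ ℝ (κ → ℝ)).prod
      (ContinuousLinearMap.pi fun i => (fderiv ℝ (F i) xs).comp A) with hΨ'_def
    have hcoord : ∀ i : κ, HasFDerivAt (fun q : (ℝ × (κ → ℝ)) => F i (inn q))
        ((fderiv ℝ (F i) xs).comp A) (0, 0) := by
      intro i
      have hFi : HasFDerivAt (F i) (fderiv ℝ (F i) xs) (inn (0, 0)) := by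
        rw [hinn00]
        exact ((hF i).differentiable (by norm_num) xs).hasFDerivAt
      exact hFi.comp (0, 0) (hinnA (0, 0))
    have hΨd : HasFDerivAt Ψ Ψ' (0, 0) :=
      hasFDerivAt_fst.prodMk (hasFDerivAt_pi''  hcoord)
    have heq : Ψ' = (e : (ℝ × (κ → ℝ)) →L[ℝ] (ℝ × (κ → ℝ))) := by
      apply ContinuousLinearMap.ext
      intro q
      have hAq : A q = q.1 • d + ∑ j, q.2 j • u j := by
        simp [hA_def, ContinuousLinearMap.add_apply, ContinuousLinearMap.smulRight_apply,
          ContinuousLinearMap.sum_apply, ContinuousLinearMap.comp_apply,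
          ContinuousLinearMap.proj_apply, ContinuousLinearMap.coe_fst',
          ContinuousLinearMap.coe_snd']
      ext
      · simp [hΨ'_def, he_def, ContinuousLinearMap.prod_apply, ContinuousLinearMap.coe_fst']
      · rename_i i
        simp only [hΨ'_def, ContinuousLinearMap.prod_apply, ContinuousLinearMap.pi_apply,
          ContinuousLinearMap.comp_apply, hAq, he_def, ContinuousLinearEquiv.coe_refl',
          id_eq, map_add, _root_.map_smul, map_sum, hd, hu]
        simp [Finset.sum_ite_eq, mul_ite]
    rwa [heq] at hΨd
  have h12 : (1 : WithTop ℕ∞) ≤ 2 := by norm_num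
  have hs : HasStrictFDerivAt Ψ (e : (ℝ × (κ → ℝ)) →L[ℝ] (ℝ × (κ → ℝ))) (0, 0) :=
    hΨs.contDiffAt.hasStrictFDerivAt' hΨ' (by norm_num)
  set V : (ℝ × (κ → ℝ)) → (ℝ × (κ → ℝ)) := hs.localInverse Ψ e (0, 0) with hV_def
  have hΨ00 : Ψ (0, 0) = (0, 0) := by
    simp only [hΨ_def, hinn00]
    exact Prod.ext rfl (funext fun i => hF0 i)
  have hV2 : ContDiffAt ℝ 2 V (0, 0) := by
    have := hΨs.contDiffAt.to_localInverse (f' := e) hΨ' (by norm_num)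
    rwa [hΨ00] at this
  have hV0 : V (0, 0) = (0, 0) := by
    have := hs.localInverse_apply_image
    rwa [hΨ00] at this
  have hVd : HasFDerivAt V (e.symm : (ℝ × (κ → ℝ)) →L[ℝ] (ℝ × (κ → ℝ))) (0, 0) := by
    have := hs.to_localInverse.hasFDerivAt
    rwa [hΨ00] at this
  have hri : ∀ᶠ z in nhds ((0:ℝ), (0 : κ → ℝ)), Ψ (V z) = z := by
    have := hs.eventually_right_inverse
    rwa [hΨ00] at this
  -- the curve
  set y : ℝ → (κ → ℝ) := fun s => (V (s, 0)).2 with hy_def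
  set γ : ℝ → (Fin n → ℝ) := fun s => inn (s, y s) with hγ_def
  have hpairC : ContDiffAt ℝ 2 (fun s : ℝ => ((s, (0 : κ → ℝ)) : (ℝ × (κ → ℝ)))) 0 :=
    (contDiff_id.prodMk contDiff_const).contDiffAt
  have hVsC : ContDiffAt ℝ 2 (fun s : ℝ => V (s, 0)) 0 := ContDiffAt.comp 0 hV2 hpairC
  have hyC : ContDiffAt ℝ 2 y 0 := contDiff_snd.comp_contDiffAt 0 hVsC
  have hγC : ContDiffAt ℝ 2 γ 0 :=
    hinn.comp_contDiffAt 0 ((contDiff_id.contDiffAt).prodMk hyC)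
  have hV0' : V 0 = 0 := by rw [← Prod.mk_zero_zero]; exact hV0
  have hy0 : y 0 = 0 := by simp [hy_def, hV0]
  have hγ0 : γ 0 = xs := by
    simp only [hγ_def, hy0, hinn_def]
    simp
  -- derivative of the curve at 0
  have hpairD : HasDerivAt (fun s : ℝ => ((s, (0 : κ → ℝ)) : (ℝ × (κ → ℝ)))) ((1 : ℝ), (0 : κ → ℝ)) 0 :=
    (hasDerivAt_id 0).prodMk (hasDerivAt_const 0 0)
  have hVsD : HasDerivAt (fun s : ℝ => V (s, 0)) ((1 : ℝ), (0 : κ → ℝ)) 0 := by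
    have := hVd.comp_hasDerivAt 0 hpairD
    simpa [he_def, Function.comp_def] using this
  have hyD : HasDerivAt y (0 : κ → ℝ) 0 := by
    have := (ContinuousLinearMap.snd ℝ ℝ (κ → ℝ)).hasFDerivAt.comp_hasDerivAt 0 hVsD
    simpa [Function.comp_def] using this
  have hγD : HasDerivAt γ d 0 := by
    have t1 : HasDerivAt (fun s : ℝ => s • d) d 0 := by
      simpa using (hasDerivAt_id (0:ℝ)).smul_const d
    have t2 : ∀ j : κ, HasDerivAt (fun s : ℝ => y s j • u j) (0 : Fin n → ℝ) 0 := by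
      intro j
      have hyj : HasDerivAt (fun s => y s j) (0 : ℝ) 0 := by
        have := (ContinuousLinearMap.proj j (R := ℝ)
          (φ := fun _ : κ => ℝ)).hasFDerivAt.comp_hasDerivAt 0 hyD
        simpa [Function.comp_def] using this
      simpa using hyj.smul_const (u j)
    have tsum : HasDerivAt (fun s : ℝ => ∑ j, y s j • u j) (0 : Fin n → ℝ) 0 := by
      have := HasDerivAt.fun_sum (fun j (_ : j ∈ Finset.univ) => t2 j)
      simpa using this
    have := ((t1.add tsum).const_add xs)
    rw [add_zero] at this
    exact this
  -- the constraints vanish along the curve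
  have hFγ : ∀ᶠ s in nhds 0, ∀ i, F i (γ s) = 0 := by
    have htend : Filter.Tendsto (fun s : ℝ => ((s, (0 : κ → ℝ)) : (ℝ × (κ → ℝ)))) (nhds 0)
        (nhds ((0:ℝ), (0 : κ → ℝ))) := by
      have : ContinuousAt (fun s : ℝ => ((s, (0 : κ → ℝ)) : (ℝ × (κ → ℝ)))) 0 :=
        (continuous_id.prodMk continuous_const).continuousAt
      exact this
    filter_upwards [htend.eventually hri] with s hsri i
    have h1 : (V (s, 0)).1 = s := congrArg Prod.fst hsri
    have h2 : (fun i => F i (inn (V (s, 0)))) = (0 : κ → ℝ) := congrArg Prod.snd hsri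
    have : F i (inn (V (s, 0))) = 0 := congrFun h2 i
    have hVeq : V (s, 0) = (s, y s) := by
      rw [hy_def]
      exact Prod.ext h1 rfl
    rw [hγ_def]
    simp only []
    rw [← hVeq]
    exact this
  exact ⟨γ, hγC, hγ0, hγD, hFγ⟩


/-- Select a finite index subset whose vectors are independent and span the full span. -/
lemma exists_indep_subset {ι : Type*} [Fintype ι] {n : ℕ} (v : ι → (Fin n → ℝ)) :
    ∃ t : Finset ι, LinearIndependent ℝ (fun i : t => v i) ∧
      Submodule.span ℝ (Set.range fun i : t => v i) = Submodule.span ℝ (Set.range v) := by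
  classical
  obtain ⟨b, hbsub, hbspan, hbind⟩ := exists_linearIndependent ℝ (Set.range v)
  have hbfin : b.Finite := hbind.setFinite
  have hpre : ∀ x ∈ hbfin.toFinset, ∃ i, v i = x := by
    intro x hx
    exact hbsub (hbfin.mem_toFinset.1 hx)
  set pick : hbfin.toFinset → ι := fun x => Classical.choose (hpre x.1 x.2) with hpick
  have hpick_spec : ∀ x : hbfin.toFinset, v (pick x) = x.1 :=
    fun x => Classical.choose_spec (hpre x.1 x.2)
  set t : Finset ι := hbfin.toFinset.attach.image pick with ht
  have himg : v '' ↑t = b := by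
    apply Set.Subset.antisymm
    · rintro z ⟨i, hi, rfl⟩
      simp only [ht, Finset.coe_image, Set.mem_image, Finset.mem_coe,
        Finset.mem_attach] at hi
      obtain ⟨x, -, rfl⟩ := hi
      rw [hpick_spec x]
      exact hbfin.mem_toFinset.1 x.2
    · intro z hz
      refine ⟨pick ⟨z, hbfin.mem_toFinset.2 hz⟩, ?_, hpick_spec _⟩
      exact Finset.mem_coe.2 (Finset.mem_image_of_mem pick (Finset.mem_attach _ _))
  have hvt : ∀ i ∈ t, v i ∈ b := by
    intro i hi
    exact himg ▸ Set.mem_image_of_mem v (Finset.mem_coe.2 hi)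
  have hinj : Function.Injective (fun i : t => (⟨v i.1, hvt i.1 i.2⟩ : b)) := by
    intro i i' hii'
    have hv : v i.1 = v i'.1 := congrArg Subtype.val hii'
    -- each i ∈ t is `pick` of its value
    have key : ∀ i : t, i.1 = pick ⟨v i.1, hbfin.mem_toFinset.2 (hvt i.1 i.2)⟩ := by
      rintro ⟨i, hi⟩
      simp only [ht, Finset.mem_image, Finset.mem_attach] at hi
      obtain ⟨x, -, rfl⟩ := hi
      exact congrArg pick (Subtype.ext (hpick_spec x).symm)
    apply Subtype.ext
    rw [key i, key i']
    congr 1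
    exact Subtype.ext hv
  have hrange : Set.range (fun i : t => v i) = v '' ↑t := by
    ext
    constructor
    · rintro ⟨i, rfl⟩
      exact ⟨i.1, Finset.mem_coe.2 i.2, rfl⟩
    · rintro ⟨a, ha, rfl⟩
      exact ⟨⟨a, Finset.mem_coe.1 ha⟩, rfl⟩
  refine ⟨t, ?_, by rw [hrange, himg, hbspan]⟩
  have := hbind.comp _ hinj
  exact this

/-- A dual family for a linearly independent family w.r.t. the dot product. -/
lemma exists_dual_family {ι : Type*} [Fintype ι] [DecidableEq ι] {n : ℕ}
    {v : ι → (Fin n → ℝ)} (hv : LinearIndependent ℝ v) :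
    ∃ u : ι → (Fin n → ℝ), ∀ i j, v i ⬝ᵥ u j = if i = j then 1 else 0 := by
  set Q : (ι → ℝ) →ₗ[ℝ] (Fin n → ℝ) := Fintype.linearCombination ℝ v with hQ
  set P : (Fin n → ℝ) →ₗ[ℝ] (ι → ℝ) := LinearMap.pi
    (fun i => { toFun := fun w => v i ⬝ᵥ w
                map_add' := fun a b => dotProduct_add (v i) a b
                map_smul' := fun c a => by simp [dotProduct_smul] }) with hP
  have hPapp : ∀ w i, P w i = v i ⬝ᵥ w := fun w i => rfl
  have hQapp : ∀ y, Q y = ∑ i, y i • v i := by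
    intro y
    simp [hQ, Fintype.linearCombination_apply]
  have hinj : Function.Injective (P ∘ₗ Q) := by
    rw [← LinearMap.ker_eq_bot, LinearMap.ker_eq_bot']
    intro y hy
    have hy' : ∀ i, v i ⬝ᵥ Q y = 0 := fun i => congrFun (α := ι) hy i
    set D : (Fin n → ℝ) →ₗ[ℝ] ℝ :=
      { toFun := fun a => a ⬝ᵥ Q y
        map_add' := fun a b => add_dotProduct a b (Q y)
        map_smul' := fun c a => by simp [smul_dotProduct] } with hDdef
    have hD : ∀ a, D a = a ⬝ᵥ Q y := fun a => rfl
    have hQy : Q y ⬝ᵥ Q y = 0 := by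
      have e1 : Q y ⬝ᵥ Q y = D (∑ i, y i • v i) := by rw [hD, hQapp]
      rw [e1, map_sum]
      refine Finset.sum_eq_zero fun i _ => ?_
      rw [D.map_smul, hD, hy' i, smul_zero]
    have hQy0 : Q y = 0 := dotProduct_self_eq_zero.1 hQy
    have := Fintype.linearIndependent_iff.1 hv y (by rw [← hQapp]; exact hQy0)
    exact funext this
  have hsurj : Function.Surjective (P ∘ₗ Q) := LinearMap.surjective_of_injective hinj
  choose z hz using fun j => hsurj (Pi.single j 1)
  refine ⟨fun j => Q (z j), fun i j => ?_⟩
  have := congrFun (hz j) i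
  rw [LinearMap.comp_apply, hPapp] at this
  rw [this, Pi.single_apply]


/-- Andreani–Echagüe–Schuverdt: under constant rank of the Jacobian in a
neighborhood of a local minimizer, every Lagrange multiplier satisfies WSOC. -/
theorem stmt8 {n m p : ℕ} (f : (Fin n → ℝ) → ℝ) (h : Fin m → (Fin n → ℝ) → ℝ)
    (g : Fin p → (Fin n → ℝ) → ℝ)
    (hf : ContDiff ℝ 2 f) (hh : ∀ i, ContDiff ℝ 2 (h i)) (hg : ∀ j, ContDiff ℝ 2 (g j))
    (xs : Fin n → ℝ) (hfeas : Feas h g xs)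
    (hmin : IsLocalMinOn f {x | Feas h g x} xs)
    (hconst : ∀ᶠ x in nhds xs, (Jac h g xs x).rank = (Jac h g xs xs).rank) :
    ∀ (lam : Fin m → ℝ) (mu : Fin p → ℝ), IsLagMult f h g xs lam mu →
      ∀ d, critSub h g xs d → 0 ≤ hessQ (Lagr f h g lam mu) xs d := by
  intro lam mu hLM d hd
  classical
  -- the combined family of equality and active-inequality constraints
  set c : (Fin m ⊕ {j : Fin p // g j xs = 0}) → (Fin n → ℝ) → ℝ :=
    Sum.elim h (fun j => g j.1) with hc_def
  have hc : ∀ i, ContDiff ℝ 2 (c i) := by rintro (i | j); exacts [hh i, hg j.1]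
  have hc0 : ∀ i, c i xs = 0 := by rintro (i | j); exacts [hfeas.1 i, j.2]
  have hcd : ∀ i, fderiv ℝ (c i) xs d = 0 := by
    rintro (i | j); exacts [hd.1 i, hd.2 j.1 j.2]
  set w : (Fin n → ℝ) → (Fin m ⊕ {j : Fin p // g j xs = 0}) → (Fin n → ℝ) :=
    fun x i k => fderiv ℝ (c i) x (Pi.single k 1) with hw_def
  have hJac : ∀ x, Jac h g xs x = Matrix.of (w x) := by
    intro x; ext i k; cases i <;> rfl
  have hrank : ∀ x, (Jac h g xs x).rank
      = Module.finrank ℝ (Submodule.span ℝ (Set.range (w x))) := by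
    intro x; rw [hJac x]; exact Matrix.rank_eq_finrank_span_row _
  have hdot : ∀ (φ : (Fin n → ℝ) →L[ℝ] ℝ) (e : Fin n → ℝ),
      φ e = e ⬝ᵥ (fun k => φ (Pi.single k 1)) := by
    intro φ e; rw [clm_apply_eq_sum]; rfl
  -- select a basis subfamily at xs
  obtain ⟨t, hti, hts⟩ := exists_indep_subset (w xs)
  obtain ⟨u, hu⟩ := exists_dual_family hti
  -- the curve
  have hu' : ∀ (i j : t), fderiv ℝ (c i.1) xs (u j) = if i = j then 1 else 0 := by
    intro i j
    rw [hdot, dotProduct_comm]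
    exact hu i j
  obtain ⟨γ, hγC, hγ0, hγd, hγF⟩ := exists_curve (fun i : t => c i.1)
    (fun i => hc i.1) xs (fun i => hc0 i.1) u hu' d (fun i => hcd i.1)
  have htend : Filter.Tendsto γ (nhds 0) (nhds xs) := by
    have := hγC.continuousAt.tendsto
    rwa [hγ0] at this
  -- nearby span stability from constant rank
  have hcontw : Continuous fun x => (fun i : t => w x i) := by
    apply continuous_pi; intro i
    apply continuous_pi; intro k
    exact ((hc i.1).continuous_fderiv (by norm_num)).clm_apply continuous_const
  have hev1 : ∀ᶠ x in nhds xs, LinearIndependent ℝ (fun i : t => w x i) := by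
    have hopen : IsOpen {v : t → (Fin n → ℝ) | LinearIndependent ℝ v} :=
      isOpen_setOf_linearIndependent
    have := hcontw.continuousAt.preimage_mem_nhds (hopen.mem_nhds hti)
    exact Filter.eventually_of_mem this fun x hx => hx
  have hspan : ∀ᶠ x in nhds xs, ∀ i, w x i ∈
      Submodule.span ℝ (Set.range (fun i : t => w x i)) := by
    filter_upwards [hev1, hconst] with x hind hrk
    have hle : Submodule.span ℝ (Set.range (fun i : t => w x i))
        ≤ Submodule.span ℝ (Set.range (w x)) :=
      Submodule.span_mono (by rintro _ ⟨i, rfl⟩; exact ⟨i.1, rfl⟩)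
    have h1 : Module.finrank ℝ (Submodule.span ℝ (Set.range (fun i : t => w x i)))
        = t.card := by
      rw [finrank_span_eq_card hind, Fintype.card_coe]
    have h2 : Module.finrank ℝ (Submodule.span ℝ (Set.range (w x))) = t.card := by
      rw [← hrank x, hrk, hrank xs, ← hts, finrank_span_eq_card hti, Fintype.card_coe]
    have heq := Submodule.eq_of_le_of_finrank_le hle (by rw [h1, h2])
    intro i
    rw [heq]
    exact Submodule.subset_span ⟨i, rfl⟩
  -- a ball on which everything holds
  obtain ⟨u0, hu0, hu0c⟩ := hγC.contDiffOn (le_refl 2) (by simp)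
  have hV0 : (0:ℝ) ∈ interior u0 := mem_interior_iff_mem_nhds.2 hu0
  have hγdiff : ∀ s ∈ interior u0, HasDerivAt γ (deriv γ s) s := by
    intro s hs
    exact (((hu0c.mono interior_subset).differentiableOn (by norm_num)).differentiableAt
      (isOpen_interior.mem_nhds hs)).hasDerivAt
  have hall : ∀ᶠ s in nhds (0:ℝ), (∀ i : t, c i.1 (γ s) = 0) ∧
      (∀ i, w (γ s) i ∈ Submodule.span ℝ (Set.range (fun i : t => w (γ s) i))) ∧
      s ∈ interior u0 := by
    filter_upwards [hγF, htend.eventually hspan, isOpen_interior.mem_nhds hV0] with s h1 h2 h3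
    exact ⟨h1, h2, h3⟩
  obtain ⟨ε, hε, hball⟩ := Metric.mem_nhds_iff.1 hall
  set B := Metric.ball (0:ℝ) ε with hB_def
  have h0B : (0:ℝ) ∈ B := Metric.mem_ball_self hε
  -- all constraints vanish identically along the curve on B
  have hczero : ∀ i, ∀ s ∈ B, c i (γ s) = 0 := by
    intro i
    have hderiv : ∀ s ∈ B, HasDerivAt (fun s' => c i (γ s')) 0 s := by
      intro s hs
      have h3 := (hball hs).2.2
      have hγs := hγdiff s h3
      have h1 : HasDerivAt (fun s' => c i (γ s'))
          (fderiv ℝ (c i) (γ s) (deriv γ s)) s :=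
        (((hc i).differentiable (by norm_num) (γ s)).hasFDerivAt).comp_hasDerivAt s hγs
      have hzero : fderiv ℝ (c i) (γ s) (deriv γ s) = 0 := by
        rw [hdot]
        apply span_dot_zero ((hball hs).2.1 i)
        rintro _ ⟨i', rfl⟩
        -- the derivative of c i' ∘ γ vanishes since it is ≡ 0 near s
        have hzero' : HasDerivAt (fun s' => c i'.1 (γ s')) 0 s := by
          apply (hasDerivAt_const s (0:ℝ)).congr_of_eventuallyEq
          filter_upwards [Metric.isOpen_ball.mem_nhds hs] with s' hs'
          exact (hball hs').1 i'
        have hval : HasDerivAt (fun s' => c i'.1 (γ s'))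
            (fderiv ℝ (c i'.1) (γ s) (deriv γ s)) s :=
          (((hc i'.1).differentiable (by norm_num) (γ s)).hasFDerivAt).comp_hasDerivAt s
            (hγdiff s h3)
        have := hval.unique hzero'
        rw [hdot] at this
        exact this
      rwa [hzero] at h1
    intro s hs
    have hconst' : c i (γ s) = c i (γ 0) := by
      apply (convex_ball (0:ℝ) ε).is_const_of_fderivWithin_eq_zero
        (fun s' hs' => (hderiv s' hs').differentiableAt.differentiableWithinAt)
        (fun s' hs' => ?_) hs h0B
      rw [fderivWithin_of_isOpen Metric.isOpen_ball hs']
      have := (hderiv s' hs').hasFDerivAt.fderiv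
      rw [this]
      ext
      simp
    rw [hconst', hγ0, hc0 i]
  have hEq0 : ∀ᶠ s in nhds (0:ℝ), ∀ i, c i (γ s) = 0 :=
    Filter.eventually_of_mem (Metric.ball_mem_nhds 0 hε) fun s hs i => hczero i s hs
  -- the curve is feasible near 0
  have hfeasγ : ∀ᶠ s in nhds (0:ℝ), Feas h g (γ s) := by
    have hgle : ∀ᶠ s in nhds (0:ℝ), ∀ j, g j (γ s) ≤ 0 := by
      rw [Filter.eventually_all]
      intro j
      by_cases hj : g j xs = 0
      · filter_upwards [hEq0] with s hs
        exact le_of_eq (hs (Sum.inr ⟨j, hj⟩))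
      · have hlt : g j xs < 0 := lt_of_le_of_ne (hfeas.2 j) hj
        have htendg : Filter.Tendsto (fun s => g j (γ s)) (nhds 0) (nhds (g j xs)) :=
          ((hg j).continuous.tendsto xs).comp htend
        filter_upwards [htendg.eventually_lt_const hlt] with s hs
        exact le_of_lt hs
    filter_upwards [hEq0, hgle] with s h1 h2
    exact ⟨fun i => h1 (Sum.inl i), h2⟩
  -- the Lagrangian is C², equals f along the curve, and has a local min at 0
  set L := Lagr f h g lam mu with hL_def
  have hLC : ContDiff ℝ 2 L := by
    show ContDiff ℝ 2 fun x => f x + ∑ i, lam i * h i x + ∑ j, mu j * g j x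
    exact (hf.add (ContDiff.sum fun i _ => contDiff_const.mul (hh i))).add
      (ContDiff.sum fun j _ => contDiff_const.mul (hg j))
  have hmuzero : ∀ j, g j xs ≠ 0 → mu j = 0 := by
    intro j hj
    rcases mul_eq_zero.1 (hLM.2.2 j) with h' | h'
    · exact h'
    · exact absurd h' hj
  have hLval : ∀ x, (∀ i, c i x = 0) → L x = f x := by
    intro x hx
    show f x + ∑ i, lam i * h i x + ∑ j, mu j * g j x = f x
    have h1 : ∀ i, h i x = 0 := fun i => hx (Sum.inl i)
    have h2 : ∀ j, mu j * g j x = 0 := by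
      intro j
      by_cases hj : g j xs = 0
      · have hgx : g j x = 0 := hx (Sum.inr ⟨j, hj⟩)
        rw [hgx, mul_zero]
      · rw [hmuzero j hj, zero_mul]
    rw [Finset.sum_eq_zero fun i _ => by rw [h1 i, mul_zero],
      Finset.sum_eq_zero fun j _ => h2 j, add_zero, add_zero]
  have hminγ : ∀ᶠ s in nhds (0:ℝ), L (γ 0) ≤ L (γ s) := by
    have hminf : ∀ᶠ x in nhdsWithin xs {x | Feas h g x}, f xs ≤ f x := hmin
    have htendW : Filter.Tendsto γ (nhds 0) (nhdsWithin xs {x | Feas h g x}) :=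
      tendsto_nhdsWithin_iff.2 ⟨htend, hfeasγ⟩
    filter_upwards [htendW.eventually hminf, hEq0] with s h1 h2
    rw [hγ0, hLval xs hc0, hLval (γ s) h2]
    exact h1
  -- conclude via the 1-D second order condition along the curve
  obtain ⟨l', hl1, hl2, hl3⟩ := comp_curve hLC hγC hγ0 hγd hLM.2.1
  have hfinal := second_order_1d hminγ hl1 hl2 hl3
  show 0 ≤ iteratedFDeriv ℝ 2 L xs ![d, d]
  rw [iteratedFDeriv_two_apply]
  simpa using hfinal
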